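/- Let t ∈ ℕ, and for each i with 1 ≤ i ≤ t let A_i : ℕ → ℕ∞ and l_i ∈ ℕ. For 0 ≤ i ≤ t and k, x ∈ ℕ define M(i,k,x) as the infimum in ℕ∞ of Σ_{q=1}^{i} A_q(j_q) over all tuples (j_1, …, j_i) of natural numbers satisfying l_q ∸ x ≤ j_q ≤ l_q for every q and Σ_{q=1}^{i} j_q ≥ k (so M(0,k,x) = 0 if k = 0 and M(0,k,x) = ⊤ otherwise). Then for every i with 1 ≤ i ≤ t and all k, x ∈ ℕ: M(i,k,x) = inf { A_i(j) + M(i−1, k ∸ j, x) : j ∈ ℕ, l_i ∸ x ≤ j ≤ l_i }. (Correctness of the second-level dynamic-programming recurrence, equation (3), in the proof of Theorem 3.) -/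

import Mathlib

/-- Correctness of the second-level dynamic-programming recurrence (equation (3)) in the
proof of Theorem 3: with `M i k x` the minimum of `Σ_{q=1}^{i} A_q(j_q)` over tuples
`(j_1, …, j_i)` with `l_q ∸ x ≤ j_q ≤ l_q` for each `q` and `Σ j_q ≥ k`, one has, for
every `1 ≤ i ≤ t` and all `k`, `x`,
`M i k x = inf { A_i(j) + M (i-1) (k ∸ j) x : l_i ∸ x ≤ j ≤ l_i }`. -/
theorem dp_recurrence_correct
    (t : ℕ) (A : ℕ → ℕ → ℕ∞) (l : ℕ → ℕ)
    (M : ℕ → ℕ → ℕ → ℕ∞)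
    (hM : ∀ i k x : ℕ, M i k x =
      sInf {v : ℕ∞ | ∃ j : ℕ → ℕ,
        (∀ q ∈ Finset.Icc 1 i, l q - x ≤ j q ∧ j q ≤ l q) ∧
        k ≤ ∑ q ∈ Finset.Icc 1 i, j q ∧
        v = ∑ q ∈ Finset.Icc 1 i, A q (j q)}) :
    ∀ i : ℕ, 1 ≤ i → i ≤ t → ∀ k x : ℕ,
      M i k x =
        sInf {v : ℕ∞ | ∃ j : ℕ,
          l i - x ≤ j ∧ j ≤ l i ∧ v = A i j + M (i - 1) (k - j) x} := by
  intro i hi _hit k x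
  obtain ⟨n, rfl⟩ : ∃ n, i = n + 1 := ⟨i - 1, (Nat.succ_pred_eq_of_pos hi).symm⟩
  simp only [Nat.add_sub_cancel]
  apply le_antisymm
  · apply le_sInf
    rintro v ⟨j, hj1, hj2, rfl⟩
    rcases eq_or_ne (M n (k - j) x) ⊤ with h | h
    · simp [h]
    · set S := {v : ℕ∞ | ∃ j' : ℕ → ℕ,
        (∀ q ∈ Finset.Icc 1 n, l q - x ≤ j' q ∧ j' q ≤ l q) ∧
        (k - j) ≤ ∑ q ∈ Finset.Icc 1 n, j' q ∧
        v = ∑ q ∈ Finset.Icc 1 n, A q (j' q)} with hS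
      have hMS : M n (k - j) x = sInf S := hM n (k - j) x
      have hne : S.Nonempty := by
        by_contra hemp
        rw [Set.not_nonempty_iff_eq_empty] at hemp
        rw [hMS, hemp, sInf_empty] at h
        exact h rfl
      have hmem : sInf S ∈ S := csInf_mem hne
      obtain ⟨j', hc, hs, hv⟩ := hmem
      rw [hM (n + 1) k x]
      apply sInf_le
      refine ⟨fun q => if q = n + 1 then j else j' q, ?_, ?_, ?_⟩
      · intro q hq
        rcases eq_or_ne q (n + 1) with rfl | hqn
        · simpa using And.intro hj1 hj2
        · have hq' : q ∈ Finset.Icc 1 n := by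
            simp only [Finset.mem_Icc] at hq ⊢
            exact ⟨hq.1, Nat.lt_succ_iff.mp (lt_of_le_of_ne hq.2 hqn)⟩
          simpa [hqn] using hc q hq'
      · rw [Finset.sum_Icc_succ_top (Nat.one_le_iff_ne_zero.mpr (Nat.succ_ne_zero n))]
        simp only [eq_self_iff_true, if_true]
        have : ∑ q ∈ Finset.Icc 1 n, (if q = n + 1 then j else j' q)
            = ∑ q ∈ Finset.Icc 1 n, j' q := by
          apply Finset.sum_congr rfl
          intro q hq
          have : q ≠ n + 1 := by
            simp only [Finset.mem_Icc] at hq; omega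
          simp [this]
        rw [this]
        omega
      · rw [Finset.sum_Icc_succ_top (Nat.one_le_iff_ne_zero.mpr (Nat.succ_ne_zero n))]
        simp only [eq_self_iff_true, if_true]
        have : ∑ q ∈ Finset.Icc 1 n, A q (if q = n + 1 then j else j' q)
            = ∑ q ∈ Finset.Icc 1 n, A q (j' q) := by
          apply Finset.sum_congr rfl
          intro q hq
          have : q ≠ n + 1 := by
            simp only [Finset.mem_Icc] at hq; omega
          simp [this]
        rw [this, hMS, hv, add_comm]
  · rcases eq_or_ne (M (n + 1) k x) ⊤ with h | h
    · exact h ▸ le_top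
    · set S := {v : ℕ∞ | ∃ j : ℕ → ℕ,
        (∀ q ∈ Finset.Icc 1 (n + 1), l q - x ≤ j q ∧ j q ≤ l q) ∧
        k ≤ ∑ q ∈ Finset.Icc 1 (n + 1), j q ∧
        v = ∑ q ∈ Finset.Icc 1 (n + 1), A q (j q)} with hS
      have hMS : M (n + 1) k x = sInf S := hM (n + 1) k x
      have hne : S.Nonempty := by
        by_contra hemp
        rw [Set.not_nonempty_iff_eq_empty] at hemp
        rw [hMS, hemp, sInf_empty] at h
        exact h rfl
      have hmem : sInf S ∈ S := csInf_mem hne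
      obtain ⟨j, hc, hs, hv⟩ := hmem
      have hi1 : n + 1 ∈ Finset.Icc 1 (n + 1) := by simp
      obtain ⟨hc1, hc2⟩ := hc (n + 1) hi1
      have hsum : ∑ q ∈ Finset.Icc 1 (n + 1), j q
          = ∑ q ∈ Finset.Icc 1 n, j q + j (n + 1) :=
        Finset.sum_Icc_succ_top (Nat.one_le_iff_ne_zero.mpr (Nat.succ_ne_zero n)) j
      have hMle : M n (k - j (n + 1)) x ≤ ∑ q ∈ Finset.Icc 1 n, A q (j q) := by
        rw [hM n (k - j (n + 1)) x]
        apply sInf_le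
        refine ⟨j, ?_, ?_, rfl⟩
        · intro q hq
          apply hc
          simp only [Finset.mem_Icc] at hq ⊢
          omega
        · omega
      have helem : A (n + 1) (j (n + 1)) + M n (k - j (n + 1)) x ∈
          {v : ℕ∞ | ∃ j' : ℕ,
            l (n + 1) - x ≤ j' ∧ j' ≤ l (n + 1) ∧
            v = A (n + 1) j' + M n (k - j') x} :=
        ⟨j (n + 1), hc1, hc2, rfl⟩
      refine le_trans (sInf_le helem) ?_
      calc A (n + 1) (j (n + 1)) + M n (k - j (n + 1)) x
          ≤ A (n + 1) (j (n + 1)) + ∑ q ∈ Finset.Icc 1 n, A q (j q) :=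
            add_le_add_right hMle _
        _ = M (n + 1) k x := by
            rw [hMS, hv,
              Finset.sum_Icc_succ_top (Nat.one_le_iff_ne_zero.mpr (Nat.succ_ne_zero n)),
              add_comm]
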